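/- Let μ, ν, p, β be real numbers with μ > −1, ν > μ + 1, and p > 0. Then ∫₀^∞ t^μ e^{−β t/(t+p)²} (t+p)^{−ν} dt = (Γ(μ+1) Γ(ν−μ−1) / (p^{ν−μ−1} Γ(ν))) · ₂F₂(μ+1, ν−μ−1; ν/2, (ν+1)/2; −β/(4p)). -/

import Mathlib

open MeasureTheory Set

/-- Pochhammer symbol `(c)_n = c(c+1)⋯(c+n−1)` for a real `c`. -/
noncomputable def poch (c : ℝ) (n : ℕ) : ℝ := ∏ i ∈ Finset.range n, (c + i)

/-- The generalized hypergeometric series `₂F₂(a₁,a₂;b₁,b₂;z)`. -/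
noncomputable def hyp2F2 (a₁ a₂ b₁ b₂ z : ℝ) : ℝ :=
  ∑' n : ℕ, poch a₁ n * poch a₂ n / (poch b₁ n * poch b₂ n) * z ^ n / n.factorial


lemma poch_succ (c : ℝ) (n : ℕ) : poch c (n+1) = poch c n * (c + n) := by
  simp [poch, Finset.prod_range_succ]

lemma poch_pos {c : ℝ} (hc : 0 < c) (n : ℕ) : 0 < poch c n := by
  refine Finset.prod_pos fun i _ => by positivity

lemma Gamma_add_nat {c : ℝ} (hc : 0 < c) (n : ℕ) :
    Real.Gamma (c + n) = Real.Gamma c * poch c n := by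
  induction n with
  | zero => simp [poch]
  | succ n ih =>
      have h : c + (n+1:ℕ) = (c + n) + 1 := by push_cast; ring
      rw [h, Real.Gamma_add_one (by positivity), ih, poch_succ]; ring

lemma poch_two_mul (ν : ℝ) (n : ℕ) :
    poch ν (2*n) = 4^n * poch (ν/2) n * poch ((ν+1)/2) n := by
  induction n with
  | zero => simp [poch]
  | succ n ih =>
      have h : 2*(n+1) = (2*n)+1+1 := by ring
      rw [h, poch_succ, poch_succ, ih, poch_succ, poch_succ]
      push_cast
      ring

lemma beta_pt {a b x : ℝ} (hx0 : 0 < x) (hx1 : x < 1) :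
    ((x:ℂ)) ^ ((a:ℂ)+1-1) * (1 - (x:ℂ)) ^ ((b:ℂ)+1-1) = ((x ^ a * (1-x) ^ b : ℝ) : ℂ) := by
  have e1 : ((x:ℂ)) ^ ((a:ℂ)+1-1) = ((x ^ a : ℝ) : ℂ) := by
    rw [add_sub_cancel_right, ← Complex.ofReal_cpow hx0.le]
  have e2 : (1 - (x:ℂ)) ^ ((b:ℂ)+1-1) = (((1-x) ^ b : ℝ) : ℂ) := by
    rw [add_sub_cancel_right, show (1 - (x:ℂ)) = (((1-x:ℝ)):ℂ) by push_cast; ring,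
      ← Complex.ofReal_cpow (by linarith)]
  rw [e1, e2, ← Complex.ofReal_mul]

lemma betaIoo_integrable {a b : ℝ} (ha : -1 < a) (hb : -1 < b) :
    IntegrableOn (fun u : ℝ => u ^ a * (1-u) ^ b) (Ioo 0 1) := by
  have h := Complex.betaIntegral_convergent (u := (a:ℂ)+1) (v := (b:ℂ)+1)
    (by simpa using by linarith) (by simpa using by linarith)
  rw [intervalIntegrable_iff_integrableOn_Ioo_of_le zero_le_one] at h
  have h2 := h.re
  refine (integrableOn_congr_fun (fun x hx => ?_) measurableSet_Ioo).mp h2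
  rw [beta_pt hx.1 hx.2]; simp

lemma betaIoo_eq {a b : ℝ} (ha : -1 < a) (hb : -1 < b) :
    ∫ u in Ioo (0:ℝ) 1, u ^ a * (1-u) ^ b
      = Real.Gamma (a+1) * Real.Gamma (b+1) / Real.Gamma (a+b+2) := by
  have key := Complex.Gamma_mul_Gamma_eq_betaIntegral (s := (a:ℂ)+1) (t := (b:ℂ)+1)
    (by simpa using by linarith) (by simpa using by linarith)
  have hbeta : Complex.betaIntegral ((a:ℂ)+1) ((b:ℂ)+1)
      = ((∫ u in Ioo (0:ℝ) 1, u ^ a * (1-u) ^ b : ℝ) : ℂ) := by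
    rw [Complex.betaIntegral, intervalIntegral.integral_of_le zero_le_one,
      ← Measure.restrict_congr_set Ioo_ae_eq_Ioc]
    rw [setIntegral_congr_fun measurableSet_Ioo (fun x hx => beta_pt hx.1 hx.2)]
    exact integral_ofReal
  rw [hbeta] at key
  have hG : ∀ s : ℝ, Complex.Gamma (s:ℂ) = (Real.Gamma s : ℂ) := Complex.Gamma_ofReal
  have ha1 : ((a:ℂ)+1) = ((a+1:ℝ):ℂ) := by push_cast; ring
  have hb1 : ((b:ℂ)+1) = ((b+1:ℝ):ℂ) := by push_cast; ring
  have hab : (((a+1:ℝ):ℂ)+((b+1:ℝ):ℂ)) = ((a+b+2:ℝ):ℂ) := by push_cast; ring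
  rw [ha1, hb1, hab, hG, hG, hG, ← Complex.ofReal_mul, ← Complex.ofReal_mul] at key
  have := Complex.ofReal_injective key
  have hGpos : 0 < Real.Gamma (a+b+2) := Real.Gamma_pos_of_pos (by linarith)
  field_simp
  linarith [this]

section
variable {p : ℝ} (hp : 0 < p)

lemma cov_image (hp : 0 < p) : (fun u : ℝ => p*u/(1-u)) '' Ioo 0 1 = Ioi 0 := by
  ext t
  constructor
  · rintro ⟨u, ⟨hu0, hu1⟩, rfl⟩
    have : 0 < 1 - u := by linarith
    exact div_pos (by positivity) this
  · intro ht
    have ht : (0:ℝ) < t := ht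
    refine ⟨t/(t+p), ⟨by positivity, ?_⟩, ?_⟩
    · rw [div_lt_one (by positivity)]; linarith
    · field_simp
      rw [show t + p - t = p by ring, div_self hp.ne']

lemma cov_inj (hp : 0 < p) : InjOn (fun u : ℝ => p*u/(1-u)) (Ioo 0 1) := by
  intro u hu v hv h
  simp only at h
  have hu1 : 1 - u ≠ 0 := by have := hu.2; intro h'; linarith [hu.2]
  have hv1 : 1 - v ≠ 0 := by intro h'; linarith [hv.2]
  field_simp at h
  nlinarith [hp]

lemma cov_deriv (hp : 0 < p) : ∀ u ∈ Ioo (0:ℝ) 1,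
    HasDerivWithinAt (fun u : ℝ => p*u/(1-u)) (p/(1-u)^2) (Ioo 0 1) u := by
  intro u hu
  have h1 : (1:ℝ) - u ≠ 0 := by intro h'; linarith [hu.2]
  have := (HasDerivAt.div ((hasDerivAt_id u).const_mul p)
    ((hasDerivAt_id u).const_sub 1) h1)
  refine this.hasDerivWithinAt.congr_deriv ?_
  simp only [id]
  ring
end

lemma betaIoi_integrand_eq {p a c : ℝ} (hp : 0 < p) {u : ℝ} (hu : u ∈ Ioo (0:ℝ) 1) :
    |p/(1-u)^2| • ((p*u/(1-u)) ^ a * (p*u/(1-u) + p) ^ (-c))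
      = p ^ (a+1-c) * (u ^ a * (1-u) ^ (c-a-2)) := by
  obtain ⟨hu0, hu1⟩ := hu
  have h1 : (0:ℝ) < 1 - u := by linarith
  have e0 : p*u/(1-u) + p = p/(1-u) := by field_simp; ring
  rw [smul_eq_mul, abs_of_pos (by positivity), e0,
    Real.div_rpow (mul_nonneg hp.le hu0.le) h1.le, Real.div_rpow hp.le h1.le,
    Real.mul_rpow hp.le hu0.le, Real.rpow_neg hp.le, Real.rpow_neg h1.le]
  have e2 : ((1-u):ℝ)^(2:ℕ) = (1-u)^((2:ℝ)) := by
    rw [← Real.rpow_natCast]; norm_num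
  have eRp : p^(a+1-c) = p^a * p / p^c := by
    rw [show a+1-c = a+1-c from rfl, Real.rpow_sub hp, Real.rpow_add hp, Real.rpow_one]
  have eRy : (1-u)^(c-a-2) = (1-u)^c / ((1-u)^a * (1-u)^((2:ℝ))) := by
    rw [show c-a-2 = c - (a+2) by ring, Real.rpow_sub h1, Real.rpow_add h1]
  rw [e2, eRp, eRy]
  have n1 : p^a ≠ 0 := (Real.rpow_pos_of_pos hp _).ne'
  have n2 : p^c ≠ 0 := (Real.rpow_pos_of_pos hp _).ne'
  have n3 : (1-u)^a ≠ 0 := (Real.rpow_pos_of_pos h1 _).ne'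
  have n4 : (1-u)^c ≠ 0 := (Real.rpow_pos_of_pos h1 _).ne'
  have n5 : (1-u)^((2:ℝ)) ≠ 0 := (Real.rpow_pos_of_pos h1 _).ne'
  field_simp

lemma betaIoi {a c p : ℝ} (ha : -1 < a) (hc : a + 1 < c) (hp : 0 < p) :
    IntegrableOn (fun t : ℝ => t ^ a * (t+p) ^ (-c)) (Ioi 0) ∧
    ∫ t in Ioi (0:ℝ), t ^ a * (t+p) ^ (-c)
      = p ^ (a+1-c) * (Real.Gamma (a+1) * Real.Gamma (c-a-1) / Real.Gamma c) := by
  have himg := cov_image hp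
  have hder := cov_deriv hp
  have hinj := cov_inj hp
  constructor
  · rw [← himg]
    rw [integrableOn_image_iff_integrableOn_abs_deriv_smul measurableSet_Ioo hder hinj]
    refine (integrableOn_congr_fun (fun u hu => betaIoi_integrand_eq hp hu) measurableSet_Ioo).mpr ?_
    exact (betaIoo_integrable ha (by linarith)).const_mul _
  · rw [← himg,
      integral_image_eq_integral_abs_deriv_smul measurableSet_Ioo hder hinj,
      setIntegral_congr_fun measurableSet_Ioo (fun u hu => betaIoi_integrand_eq hp hu),
      integral_const_mul, betaIoo_eq ha (by linarith)]
    have h1 : c - a - 2 + 1 = c - a - 1 := by ring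
    have h2 : a + (c - a - 2) + 2 = c := by ring
    rw [h1, h2]
open scoped ENNReal NNReal

lemma exp_tsum (x : ℝ) : Real.exp x = ∑' n : ℕ, x ^ n / n.factorial := by
  rw [Real.exp_eq_exp_ℝ, NormedSpace.exp_eq_tsum_div]


/-- For `μ > −1`, `ν > μ + 1`, `p > 0`:
`∫₀^∞ t^μ e^{−βt/(t+p)²} (t+p)^{−ν} dt
  = (Γ(μ+1)Γ(ν−μ−1)/(p^{ν−μ−1}Γ(ν))) ₂F₂(μ+1,ν−μ−1;ν/2,(ν+1)/2;−β/(4p))`. -/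
theorem integral_rpow_exp_ratio (μ ν p β : ℝ) (hμ : -1 < μ) (hν : μ + 1 < ν) (hp : 0 < p) :
    ∫ t in Ioi (0:ℝ), t ^ μ * Real.exp (-(β * t / (t + p) ^ 2)) * (t + p) ^ (-ν)
      = Real.Gamma (μ + 1) * Real.Gamma (ν - μ - 1) / (p ^ (ν - μ - 1) * Real.Gamma ν) *
          hyp2F2 (μ + 1) (ν - μ - 1) (ν / 2) ((ν + 1) / 2) (-β / (4 * p)) := by
  have hν0 : 0 < ν := by linarith
  have hμ1 : 0 < μ + 1 := by linarith
  have hδ : 0 < ν - μ - 1 := by linarith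
  set f : ℕ → ℝ → ℝ :=
    fun n t => (t ^ μ * (t+p) ^ (-ν)) * ((-(β*t/(t+p)^2))^n / n.factorial) with hfdef
  -- rewrite integrand as tsum
  have hpt : ∀ t ∈ Ioi (0:ℝ),
      t ^ μ * Real.exp (-(β*t/(t+p)^2)) * (t+p) ^ (-ν) = ∑' n, f n t := by
    intro t _
    rw [exp_tsum, show t ^ μ * (∑' n : ℕ, (-(β*t/(t+p)^2))^n / n.factorial) * (t+p)^(-ν)
      = (t ^ μ * (t+p)^(-ν)) * ∑' n : ℕ, (-(β*t/(t+p)^2))^n / n.factorial by ring,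
      ← tsum_mul_left]
  rw [setIntegral_congr_fun measurableSet_Ioi hpt]
  -- measurability
  have hmeas : ∀ n, AEStronglyMeasurable (f n) (volume.restrict (Ioi 0)) := by
    intro n
    apply Measurable.aestronglyMeasurable
    fun_prop
  -- base integrability
  have hbase := betaIoi (a := μ) (c := ν) hμ (by linarith) hp
  have hC : (∫⁻ t in Ioi (0:ℝ), ‖t ^ μ * (t+p) ^ (-ν)‖₊) < ⊤ := hbase.1.2
  -- summability bound
  set g : ℕ → ℝ := fun n => (|β|/(4*p))^n / n.factorial with hgdef
  have hg0 : ∀ n, 0 ≤ g n := fun n => by positivity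
  have hgsum : Summable g := Real.summable_pow_div_factorial _
  have hbound : ∑' n, ∫⁻ t in Ioi (0:ℝ), ‖f n t‖₊ ≠ ⊤ := by
    have step : ∀ n, (∫⁻ t in Ioi (0:ℝ), ‖f n t‖₊)
        ≤ ENNReal.ofReal (g n) * ∫⁻ t in Ioi (0:ℝ), ‖t ^ μ * (t+p) ^ (-ν)‖₊ := by
      intro n
      rw [← lintegral_const_mul' _ _ ENNReal.ofReal_ne_top]
      refine lintegral_mono_ae ?_
      rw [ae_restrict_iff' measurableSet_Ioi]
      refine ae_of_all _ fun t ht => ?_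
      have ht : (0:ℝ) < t := ht
      have htp : (0:ℝ) < t + p := by linarith
      have hratio : |(-(β*t/(t+p)^2))| ≤ |β|/(4*p) := by
        rw [abs_neg, abs_div, abs_mul, abs_of_pos ht, abs_of_pos (by positivity : (0:ℝ) < (t+p)^2)]
        rw [div_le_div_iff₀ (by positivity) (by positivity)]
        nlinarith [sq_nonneg (t - p), abs_nonneg β]
      have key : ‖f n t‖ ≤ g n * ‖t ^ μ * (t+p) ^ (-ν)‖ := by
        have e : ‖f n t‖ = ‖t ^ μ * (t+p) ^ (-ν)‖ * (|(-(β*t/(t+p)^2))| ^ n / (n.factorial:ℝ)) := by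
          rw [hfdef]
          simp [Real.norm_eq_abs, abs_mul, abs_div, abs_pow]
        rw [e, hgdef, mul_comm]
        simp only
        gcongr
        all_goals first | exact hratio | positivity
      calc (‖f n t‖₊ : ℝ≥0∞) = ENNReal.ofReal ‖f n t‖ := (ofReal_norm _).symm
        _ ≤ ENNReal.ofReal (g n * ‖t ^ μ * (t+p) ^ (-ν)‖) := ENNReal.ofReal_le_ofReal key
        _ = ENNReal.ofReal (g n) * ENNReal.ofReal ‖t ^ μ * (t+p) ^ (-ν)‖ :=
            ENNReal.ofReal_mul (hg0 n)
        _ = ENNReal.ofReal (g n) * (‖t ^ μ * (t+p) ^ (-ν)‖₊ : ℝ≥0∞) := by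
            rw [ofReal_norm]; rfl
    refine ne_top_of_le_ne_top ?_ (ENNReal.tsum_le_tsum step)
    rw [ENNReal.tsum_mul_right, ← ENNReal.ofReal_tsum_of_nonneg hg0 hgsum]
    exact ENNReal.mul_ne_top ENNReal.ofReal_ne_top hC.ne
  rw [integral_tsum hmeas hbound]
  -- per-term integral
  have hterm : ∀ n : ℕ, ∫ t in Ioi (0:ℝ), f n t
      = ((-β)^n / n.factorial) * (p ^ (μ+(n:ℝ)+1-(ν+2*(n:ℝ))) *
          (Real.Gamma (μ+(n:ℝ)+1) * Real.Gamma (ν+2*(n:ℝ)-(μ+(n:ℝ))-1)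
            / Real.Gamma (ν+2*(n:ℝ)))) := by
    intro n
    have hrw : ∀ t ∈ Ioi (0:ℝ), f n t
        = ((-β)^n / n.factorial) * (t ^ (μ+(n:ℝ)) * (t+p) ^ (-(ν+2*(n:ℝ)))) := by
      intro t ht
      have ht : (0:ℝ) < t := ht
      have htp : (0:ℝ) < t + p := by linarith
      have e1 : t ^ (μ+(n:ℝ)) = t ^ μ * t ^ (n:ℕ) := by
        rw [Real.rpow_add ht, Real.rpow_natCast]
      have e2 : (t+p) ^ (-(ν+2*(n:ℝ))) = (t+p) ^ (-ν) / ((t+p)^2)^(n:ℕ) := by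
        rw [show -(ν+2*(n:ℝ)) = -ν - ((2*n:ℕ):ℝ) by push_cast; ring,
          Real.rpow_sub htp, Real.rpow_neg htp.le, Real.rpow_natCast, pow_mul]
      have e3 : (-(β*t/(t+p)^2))^n = (-β)^n * t^(n:ℕ) / ((t+p)^2)^n := by
        rw [show -(β*t/(t+p)^2) = (-β) * t / (t+p)^2 by ring, div_pow, mul_pow]
      rw [hfdef]
      simp only
      rw [e1, e2, e3]
      have hne : ((t+p)^2)^n ≠ 0 := by positivity
      have hne2 : ((n.factorial:ℝ)) ≠ 0 := by positivity
      field_simp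
    rw [setIntegral_congr_fun measurableSet_Ioi hrw, integral_const_mul]
    congr 1
    have hb := betaIoi (a := μ+(n:ℝ)) (c := ν+2*(n:ℝ))
      (by have : (0:ℝ) ≤ (n:ℝ) := Nat.cast_nonneg n; linarith)
      (by have : (0:ℝ) ≤ (n:ℝ) := Nat.cast_nonneg n; linarith) hp
    rw [hb.2]
  rw [tsum_congr hterm, hyp2F2, ← tsum_mul_left]
  refine tsum_congr fun n => ?_
  -- termwise algebraic identity
  have g1 : Real.Gamma (μ+(n:ℝ)+1) = Real.Gamma (μ+1) * poch (μ+1) n := by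
    rw [show μ+(n:ℝ)+1 = (μ+1) + (n:ℝ) by ring, Gamma_add_nat hμ1]
  have g2 : Real.Gamma (ν+2*(n:ℝ)-(μ+(n:ℝ))-1) = Real.Gamma (ν-μ-1) * poch (ν-μ-1) n := by
    rw [show ν+2*(n:ℝ)-(μ+(n:ℝ))-1 = (ν-μ-1) + (n:ℝ) by ring, Gamma_add_nat hδ]
  have g3 : Real.Gamma (ν+2*(n:ℝ)) = Real.Gamma ν *
      (4^n * poch (ν/2) n * poch ((ν+1)/2) n) := by
    rw [show ν+2*(n:ℝ) = ν + ((2*n:ℕ):ℝ) by push_cast; ring, Gamma_add_nat hν0,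
      poch_two_mul]
  have g4 : p ^ (μ+(n:ℝ)+1-(ν+2*(n:ℝ))) = (p ^ (ν-μ-1))⁻¹ / p^(n:ℕ) := by
    rw [show μ+(n:ℝ)+1-(ν+2*(n:ℝ)) = -(ν-μ-1) - ((n:ℕ):ℝ) by push_cast; ring,
      Real.rpow_sub hp, Real.rpow_neg hp.le, Real.rpow_natCast]
  have g5 : (-β/(4*p))^n = (-β)^n / (4^n * p^n) := by
    rw [div_pow, mul_pow]
  rw [g1, g2, g3, g4, g5]
  have n1 : Real.Gamma ν ≠ 0 := (Real.Gamma_pos_of_pos hν0).ne'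
  have n2 : poch (ν/2) n ≠ 0 := (poch_pos (by linarith) n).ne'
  have n3 : poch ((ν+1)/2) n ≠ 0 := (poch_pos (by linarith) n).ne'
  have n4 : p ^ (ν-μ-1) ≠ 0 := (Real.rpow_pos_of_pos hp _).ne'
  have n5 : (p:ℝ)^(n:ℕ) ≠ 0 := by positivity
  have n6 : ((n.factorial:ℝ)) ≠ 0 := by positivity
  have n7 : ((4:ℝ))^n ≠ 0 := by positivity
  field_simp
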